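/- Let X be a real Banach space and M a closed linear subspace of X. Then X∖M is spaceable if and only if the quotient space X/M is infinite-dimensional. -/

import Mathlib

open Filter Topology

/-- A bounded linear operator `T` on `C(K, ℝ)` is a *weak multiplier* if for every bounded
pairwise disjoint sequence `(e_n)` in `C(K, ℝ)` and every sequence `(x_n)` in `K` with
`e_n (x_n) = 0` for all `n`, one has `T (e_n) (x_n) → 0`. -/
def IsWeakMultiplier {K : Type*} [TopologicalSpace K] [CompactSpace K]
    (T : C(K, ℝ) →L[ℝ] C(K, ℝ)) : Prop :=
  ∀ (e : ℕ → C(K, ℝ)) (x : ℕ → K),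
    (∃ M : ℝ, ∀ n, ‖e n‖ ≤ M) →
    (∀ i j, i ≠ j → e i * e j = 0) →
    (∀ n, (e n) (x n) = 0) →
    Filter.Tendsto (fun n => (T (e n)) (x n)) Filter.atTop (nhds 0)

/-- An operator on `C(K, ℝ)` is *weakly compact* if the image of the closed unit ball has
compact closure in the weak topology. -/
def IsWeaklyCompactOp {K : Type*} [TopologicalSpace K] [CompactSpace K]
    (S : C(K, ℝ) →L[ℝ] C(K, ℝ)) : Prop :=
  IsCompact (closure ((toWeakSpace ℝ C(K, ℝ)) '' (S '' Metric.closedBall 0 1)))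

/-- An operator on `C(K, ℝ)` is a *weak multiplication* if it has the form `g•I + S` with
`g ∈ C(K, ℝ)` and `S` weakly compact. -/
def IsWeakMultiplication {K : Type*} [TopologicalSpace K] [CompactSpace K]
    (T : C(K, ℝ) →L[ℝ] C(K, ℝ)) : Prop :=
  ∃ (g : C(K, ℝ)) (S : C(K, ℝ) →L[ℝ] C(K, ℝ)),
    IsWeaklyCompactOp S ∧ T = ContinuousLinearMap.mul ℝ C(K, ℝ) g + S

/-- A subset `A` of a real vector space is *lineable* if `A ∪ {0}` contains an
infinite-dimensional subspace. -/
def Lineable {X : Type*} [AddCommGroup X] [Module ℝ X] (A : Set X) : Prop :=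
  ∃ W : Submodule ℝ X, ¬ FiniteDimensional ℝ W ∧ (W : Set X) ⊆ A ∪ {0}

/-- A subset `A` of a real normed space is *spaceable* if `A ∪ {0}` contains a closed
infinite-dimensional subspace. -/
def Spaceable {X : Type*} [NormedAddCommGroup X] [NormedSpace ℝ X] (A : Set X) : Prop :=
  ∃ W : Submodule ℝ X, IsClosed (W : Set X) ∧ ¬ FiniteDimensional ℝ W ∧ (W : Set X) ⊆ A ∪ {0}


open Metric in
theorem mazur_aux {Y : Type*} [NormedAddCommGroup Y] [NormedSpace ℝ Y]
    (E : Submodule ℝ Y) (hE : FiniteDimensional ℝ E) {ε : ℝ} (hε : 0 < ε) :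
    ∃ N : Submodule ℝ Y, FiniteDimensional ℝ (Y ⧸ N) ∧
      ∀ e ∈ E, ∀ x ∈ N, ‖e‖ ≤ (1 + ε) * ‖e + x‖ := by
  haveI := hE
  haveI : ProperSpace E := FiniteDimensional.proper ℝ E
  set S : Set Y := E.subtype '' sphere (0:E) 1 with hS
  have hSnorm : ∀ y ∈ S, ‖y‖ = 1 := by
    rintro y ⟨e, he, rfl⟩
    simpa using mem_sphere_zero_iff_norm.mp he
  have hSc : IsCompact S := (isCompact_sphere (0:E) 1).image continuous_subtype_val
  set ε' : ℝ := ε / (1 + ε) with hε'def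
  have h1ε : (0:ℝ) < 1 + ε := by linarith
  have hε'pos : 0 < ε' := div_pos hε h1ε
  have hcov : S ⊆ ⋃ y ∈ S, ball y ε' := fun y hy =>
    Set.mem_biUnion hy (mem_ball_self hε'pos)
  obtain ⟨t, htS, htfin, htcov⟩ :=
    hSc.elim_finite_subcover_image (fun y _ => isOpen_ball) hcov
  haveI := htfin.fintype
  have hfy : ∀ y : t, ∃ g : Y →L[ℝ] ℝ, ‖g‖ = 1 ∧ g y = ‖(y:Y)‖ := by
    intro y
    apply exists_dual_vector ℝ (y : Y)
    intro h0
    have := hSnorm y (htS y.2)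
    rw [h0] at this; simp at this
  choose f hf1 hf2 using hfy
  set F : Y →ₗ[ℝ] (t → ℝ) := LinearMap.pi (fun y => (f y).toLinearMap) with hF
  refine ⟨LinearMap.ker F, ?_, ?_⟩
  · exact Module.Finite.equiv F.quotKerEquivRange.symm
  · intro e he x hx
    rcases eq_or_ne e 0 with rfl | he0
    · simpa using by positivity
    have hne : ‖e‖ ≠ 0 := norm_ne_zero_iff.mpr he0
    have hnpos : 0 < ‖e‖ := norm_pos_iff.mpr he0
    set u : E := ‖e‖⁻¹ • ⟨e, he⟩ with hu
    have hu1 : u ∈ sphere (0:E) 1 := by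
      rw [mem_sphere_zero_iff_norm, norm_smul]
      have : ‖(⟨e, he⟩ : E)‖ = ‖e‖ := rfl
      rw [this, norm_inv, Real.norm_eq_abs, abs_of_pos hnpos, inv_mul_cancel₀ hne]
    have huS : (u : Y) ∈ S := ⟨u, hu1, rfl⟩
    obtain ⟨y, hyt, hyball⟩ := Set.mem_iUnion₂.mp (htcov huS)
    have hynorm : ‖y‖ = 1 := hSnorm y (htS hyt)
    have hfyx : f ⟨y, hyt⟩ x = 0 := by
      have : F x = 0 := hx
      exact congrFun this ⟨y, hyt⟩
    set g := f ⟨y, hyt⟩ with hg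
    have hgy : g y = 1 := by rw [hg, hf2 ⟨y, hyt⟩]; exact hynorm
    have hdist : ‖(u:Y) - y‖ < ε' := by
      rw [← dist_eq_norm]; exact mem_ball.mp hyball
    have key : 1 - ε' ≤ ‖(u:Y) + ‖e‖⁻¹ • x‖ := by
      have h1 : g ((u:Y) + ‖e‖⁻¹ • x) = g y + g ((u:Y) - y) := by
        have : g (‖e‖⁻¹ • x) = 0 := by
          rw [map_smul, smul_eq_mul, hfyx, mul_zero]
        rw [map_add, this, add_zero]
        rw [← map_add]; congr 1; abel
      have h2 : |g ((u:Y) - y)| ≤ ‖(u:Y) - y‖ := by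
        calc |g ((u:Y) - y)| ≤ ‖g‖ * ‖(u:Y) - y‖ := g.le_opNorm _
        _ = ‖(u:Y) - y‖ := by rw [hf1 ⟨y, hyt⟩, one_mul]
      have h3 : g ((u:Y) + ‖e‖⁻¹ • x) ≤ ‖(u:Y) + ‖e‖⁻¹ • x‖ := by
        calc g ((u:Y) + ‖e‖⁻¹ • x) ≤ |g ((u:Y) + ‖e‖⁻¹ • x)| := le_abs_self _
        _ ≤ ‖g‖ * ‖(u:Y) + ‖e‖⁻¹ • x‖ := g.le_opNorm _
        _ = _ := by rw [hf1 ⟨y, hyt⟩, one_mul]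
      have := abs_le.mp h2
      rw [h1, hgy] at h3
      linarith [hdist]
    have hux : (u:Y) + ‖e‖⁻¹ • x = ‖e‖⁻¹ • (e + x) := by
      rw [smul_add]; rfl
    rw [hux, norm_smul, norm_inv, Real.norm_eq_abs, abs_of_pos hnpos] at key
    have hie : ‖e‖ * ‖e‖⁻¹ = 1 := mul_inv_cancel₀ hne
    have hfinal : (1 - ε') * ‖e‖ ≤ ‖e + x‖ := by
      calc (1 - ε') * ‖e‖ ≤ (‖e‖⁻¹ * ‖e + x‖) * ‖e‖ := by
            exact mul_le_mul_of_nonneg_right key (norm_nonneg e)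
        _ = ‖e + x‖ * (‖e‖ * ‖e‖⁻¹) := by ring
        _ = ‖e + x‖ := by rw [hie, mul_one]
    have hprod : (1 + ε) * (1 - ε') = 1 := by
      rw [hε'def]; field_simp; ring
    nlinarith [hfinal, norm_nonneg (e+x)]

theorem findim_quot_inf {Y : Type*} [AddCommGroup Y] [Module ℝ Y] (A B : Submodule ℝ Y)
    (hA : FiniteDimensional ℝ (Y ⧸ A)) (hB : FiniteDimensional ℝ (Y ⧸ B)) :
    FiniteDimensional ℝ (Y ⧸ (A ⊓ B)) := by
  haveI := hA; haveI := hB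
  have hker : LinearMap.ker (A.mkQ.prod B.mkQ) = A ⊓ B := by
    rw [LinearMap.ker_prod, Submodule.ker_mkQ, Submodule.ker_mkQ]
  have e1 := (Submodule.quotEquivOfEq _ _ hker.symm).trans
    (A.mkQ.prod B.mkQ).quotKerEquivRange
  exact Module.Finite.equiv e1.symm

theorem findim_quot_comap {Y Z : Type*} [AddCommGroup Y] [Module ℝ Y] [AddCommGroup Z]
    [Module ℝ Z] (q : Y →ₗ[ℝ] Z) (N : Submodule ℝ Z)
    (hN : FiniteDimensional ℝ (Z ⧸ N)) :
    FiniteDimensional ℝ (Y ⧸ N.comap q) := by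
  haveI := hN
  apply FiniteDimensional.of_injective (Submodule.mapQ (N.comap q) N q le_rfl)
  rw [← LinearMap.ker_eq_bot, Submodule.mapQ, Submodule.ker_liftQ_eq_bot]
  intro x hx
  simp only [LinearMap.mem_ker, LinearMap.comp_apply] at hx
  have : q x ∈ N := by rwa [← Submodule.Quotient.mk_eq_zero, ← Submodule.mkQ_apply]
  exact this

theorem exists_notmem {Y : Type*} [AddCommGroup Y] [Module ℝ Y] (M N : Submodule ℝ Y)
    (hM : ¬ FiniteDimensional ℝ (Y ⧸ M)) (hN : FiniteDimensional ℝ (Y ⧸ N)) :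
    ∃ x, x ∈ N ∧ x ∉ M := by
  by_contra h
  push_neg at h
  apply hM
  haveI := hN
  have hle : N ≤ M := fun x hx => h x hx
  have surj : Function.Surjective (Submodule.mapQ N M LinearMap.id (by simpa using hle)) := by
    intro z
    obtain ⟨y, rfl⟩ := Submodule.mkQ_surjective M z
    exact ⟨N.mkQ y, by simp [Submodule.mapQ_apply]⟩
  exact Module.Finite.of_surjective _ surj

theorem step_lemma {X : Type*} [NormedAddCommGroup X] [NormedSpace ℝ X]
    (M : Submodule ℝ X) [IsClosed (M : Set X)]
    (hM : ¬ FiniteDimensional ℝ (X ⧸ M))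
    (E₁ : Submodule ℝ X) (hE₁ : FiniteDimensional ℝ E₁)
    (E₂ : Submodule ℝ (X ⧸ M)) (hE₂ : FiniteDimensional ℝ E₂)
    {δ : ℝ} (hδ : 0 < δ) :
    ∃ x : X, x ∉ M ∧ (∀ e ∈ E₁, ∀ c : ℝ, ‖e‖ ≤ (1 + δ) * ‖e + c • x‖) ∧
      (∀ z ∈ E₂, ∀ c : ℝ, ‖z‖ ≤ (1 + δ) * ‖z + c • M.mkQ x‖) := by
  obtain ⟨N₁, hN₁, hN₁'⟩ := mazur_aux E₁ hE₁ hδ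
  obtain ⟨N₂, hN₂, hN₂'⟩ := mazur_aux E₂ hE₂ hδ
  obtain ⟨x, hxN, hxM⟩ := exists_notmem M (N₁ ⊓ (N₂.comap M.mkQ)) hM
    (findim_quot_inf _ _ hN₁ (findim_quot_comap M.mkQ N₂ hN₂))
  refine ⟨x, hxM, fun e he c => hN₁' e he _ (N₁.smul_mem c hxN.1), fun z hz c => ?_⟩
  have : M.mkQ x ∈ N₂ := hxN.2
  exact hN₂' z hz _ (N₂.smul_mem c this)

noncomputable def telSeq {α : Type*} (g : (n : ℕ) → (Fin n → α) → α) : (n : ℕ) → Fin n → α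
  | 0 => fun i => i.elim0
  | (n+1) => Fin.snoc (telSeq g n) (g n (telSeq g n))

noncomputable def telX {α : Type*} (g : (n : ℕ) → (Fin n → α) → α) (n : ℕ) : α :=
  g n (telSeq g n)

theorem telSeq_eq {α : Type*} (g : (n : ℕ) → (Fin n → α) → α) :
    ∀ n (i : Fin n), telSeq g n i = telX g i := by
  intro n
  induction n with
  | zero => exact fun i => i.elim0
  | succ n ih =>
    intro i
    refine Fin.lastCases ?_ ?_ i
    · show (Fin.snoc (telSeq g n) (g n (telSeq g n)) : Fin (n+1) → α) (Fin.last n) = _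
      rw [Fin.snoc_last]; rfl
    · intro j
      show (Fin.snoc (telSeq g n) (g n (telSeq g n)) : Fin (n+1) → α) j.castSucc = _
      rw [Fin.snoc_castSucc, ih j]; rfl

theorem one_le_prod_delta (s : Finset ℕ) : 1 ≤ ∏ k ∈ s, (1 + (1/2:ℝ)^(k+2)) := by
  calc (1:ℝ) = ∏ k ∈ s, 1 := by rw [Finset.prod_const_one]
  _ ≤ ∏ k ∈ s, (1 + (1/2:ℝ)^(k+2)) := by
      apply Finset.prod_le_prod
      · intro i _; norm_num
      · intro i _
        have : (0:ℝ) < (1/2:ℝ)^(i+2) := by positivity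
        linarith

theorem prod_delta_range_le (n : ℕ) :
    (∏ k ∈ Finset.range n, (1 + (1/2:ℝ)^(k+2))) ≤ 2 - (1/2)^n := by
  induction n with
  | zero => norm_num
  | succ n ih =>
    rw [Finset.prod_range_succ]
    have h1 : (0:ℝ) < (1/2)^n := by positivity
    have h2 : (1/2:ℝ)^(n+1) = (1/2)^n * (1/2) := by ring
    have h3 : (1/2:ℝ)^(n+2) = (1/2)^n * (1/4) := by ring
    have h4 : 0 < 1 + (1/2:ℝ)^(n+2) := by positivity
    nlinarith [ih, h1]

theorem prod_delta_Ico_le (m n : ℕ) (h : m ≤ n) :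
    (∏ k ∈ Finset.Ico m n, (1 + (1/2:ℝ)^(k+2))) ≤ 2 := by
  have := Finset.prod_range_mul_prod_Ico (fun k => (1 + (1/2:ℝ)^(k+2))) h
  have h1 := one_le_prod_delta (Finset.range m)
  have h2 := prod_delta_range_le n
  have h3 : (0:ℝ) < (1/2)^n := by positivity
  have h4 : 0 ≤ ∏ k ∈ Finset.Ico m n, (1 + (1/2:ℝ)^(k+2)) := by
    apply Finset.prod_nonneg; intro i _; positivity
  nlinarith

theorem basic_ineq {Y : Type*} [NormedAddCommGroup Y] [NormedSpace ℝ Y]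
    (v : ℕ → Y)
    (hv : ∀ n, ∀ e ∈ Submodule.span ℝ (Set.range (fun i : Fin n => v i)), ∀ c : ℝ,
      ‖e‖ ≤ (1 + (1/2:ℝ)^(n+2)) * ‖e + c • v n‖)
    (a : ℕ → ℝ) {m n : ℕ} (hmn : m ≤ n) :
    ‖∑ i ∈ Finset.range m, a i • v i‖ ≤ 2 * ‖∑ i ∈ Finset.range n, a i • v i‖ := by
  have key : ∀ n, m ≤ n → ‖∑ i ∈ Finset.range m, a i • v i‖ ≤
      (∏ k ∈ Finset.Ico m n, (1 + (1/2:ℝ)^(k+2))) * ‖∑ i ∈ Finset.range n, a i • v i‖ := by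
    intro n hn
    induction n, hn using Nat.le_induction with
    | base => simp
    | succ n hn ih =>
      have hmem : (∑ i ∈ Finset.range n, a i • v i) ∈
          Submodule.span ℝ (Set.range (fun i : Fin n => v i)) := by
        apply Submodule.sum_mem
        intro i hi
        exact Submodule.smul_mem _ _
          (Submodule.subset_span ⟨⟨i, Finset.mem_range.mp hi⟩, rfl⟩)
      have h1 := hv n _ hmem (a n)
      have hpr : 0 ≤ ∏ k ∈ Finset.Ico m n, (1 + (1/2:ℝ)^(k+2)) := by
        apply Finset.prod_nonneg; intro i _; positivity
      rw [Finset.sum_range_succ, Finset.prod_Ico_succ_top hn]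
      calc ‖∑ i ∈ Finset.range m, a i • v i‖
          ≤ (∏ k ∈ Finset.Ico m n, (1 + (1/2:ℝ)^(k+2))) *
            ‖∑ i ∈ Finset.range n, a i • v i‖ := ih
        _ ≤ (∏ k ∈ Finset.Ico m n, (1 + (1/2:ℝ)^(k+2))) *
            ((1 + (1/2:ℝ)^(n+2)) * ‖(∑ i ∈ Finset.range n, a i • v i) + a n • v n‖) :=
            mul_le_mul_of_nonneg_left h1 hpr
        _ = _ := by ring
  calc ‖∑ i ∈ Finset.range m, a i • v i‖
      ≤ (∏ k ∈ Finset.Ico m n, (1 + (1/2:ℝ)^(k+2))) *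
        ‖∑ i ∈ Finset.range n, a i • v i‖ := key n hmn
    _ ≤ 2 * ‖∑ i ∈ Finset.range n, a i • v i‖ :=
        mul_le_mul_of_nonneg_right (prod_delta_Ico_le m n hmn) (norm_nonneg _)

theorem coeff_bound {Y : Type*} [NormedAddCommGroup Y] [NormedSpace ℝ Y]
    (v : ℕ → Y)
    (hv : ∀ n, ∀ e ∈ Submodule.span ℝ (Set.range (fun i : Fin n => v i)), ∀ c : ℝ,
      ‖e‖ ≤ (1 + (1/2:ℝ)^(n+2)) * ‖e + c • v n‖)
    (a : ℕ → ℝ) {i n : ℕ} (hin : i < n) :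
    |a i| * ‖v i‖ ≤ 4 * ‖∑ j ∈ Finset.range n, a j • v j‖ := by
  have h1 : ‖a i • v i‖ ≤ ‖∑ j ∈ Finset.range (i+1), a j • v j‖ +
      ‖∑ j ∈ Finset.range i, a j • v j‖ := by
    have : a i • v i = (∑ j ∈ Finset.range (i+1), a j • v j) -
        (∑ j ∈ Finset.range i, a j • v j) := by
      rw [Finset.sum_range_succ]; abel
    rw [this]
    exact norm_sub_le _ _
  have h2 := basic_ineq v hv a (Nat.succ_le_of_lt hin)
  have h3 := basic_ineq v hv a hin.le
  have h4 : ‖a i • v i‖ = |a i| * ‖v i‖ := by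
    rw [norm_smul, Real.norm_eq_abs]
  linarith

theorem exists_good_seq {X : Type*} [NormedAddCommGroup X] [NormedSpace ℝ X]
    (M : Submodule ℝ X) [IsClosed (M : Set X)]
    (hM : ¬ FiniteDimensional ℝ (X ⧸ M)) :
    ∃ x : ℕ → X, (∀ n, x n ∉ M) ∧
      (∀ n, ∀ e ∈ Submodule.span ℝ (Set.range (fun i : Fin n => x i)), ∀ c : ℝ,
        ‖e‖ ≤ (1 + (1/2:ℝ)^(n+2)) * ‖e + c • x n‖) ∧
      (∀ n, ∀ z ∈ Submodule.span ℝ (Set.range (fun i : Fin n => M.mkQ (x i))), ∀ c : ℝ,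
        ‖z‖ ≤ (1 + (1/2:ℝ)^(n+2)) * ‖z + c • M.mkQ (x n)‖) := by
  have hstep : ∀ (n : ℕ) (v : Fin n → X), ∃ y : X, y ∉ M ∧
      (∀ e ∈ Submodule.span ℝ (Set.range v), ∀ c : ℝ,
        ‖e‖ ≤ (1 + (1/2:ℝ)^(n+2)) * ‖e + c • y‖) ∧
      (∀ z ∈ Submodule.span ℝ (Set.range (fun i => M.mkQ (v i))), ∀ c : ℝ,
        ‖z‖ ≤ (1 + (1/2:ℝ)^(n+2)) * ‖z + c • M.mkQ y‖) := by
    intro n v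
    have hδ : (0:ℝ) < (1/2)^(n+2) := by positivity
    have h1 : FiniteDimensional ℝ (Submodule.span ℝ (Set.range v)) :=
      FiniteDimensional.span_of_finite ℝ (Set.finite_range v)
    have h2 : FiniteDimensional ℝ (Submodule.span ℝ (Set.range (fun i => M.mkQ (v i)))) :=
      FiniteDimensional.span_of_finite ℝ (Set.finite_range _)
    exact step_lemma M hM _ h1 _ h2 hδ
  set g : (n : ℕ) → (Fin n → X) → X := fun n v => Classical.choose (hstep n v) with hg
  have hfe : ∀ n, (fun i : Fin n => telX g i) = telSeq g n :=
    fun n => funext fun i => (telSeq_eq g n i).symm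
  have hspec : ∀ n, (telX g n) ∉ M ∧
      (∀ e ∈ Submodule.span ℝ (Set.range (telSeq g n)), ∀ c : ℝ,
        ‖e‖ ≤ (1 + (1/2:ℝ)^(n+2)) * ‖e + c • telX g n‖) ∧
      (∀ z ∈ Submodule.span ℝ (Set.range (fun i => M.mkQ (telSeq g n i))), ∀ c : ℝ,
        ‖z‖ ≤ (1 + (1/2:ℝ)^(n+2)) * ‖z + c • M.mkQ (telX g n)‖) :=
    fun n => Classical.choose_spec (hstep n (telSeq g n))
  refine ⟨telX g, fun n => (hspec n).1, fun n => ?_, fun n => ?_⟩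
  · rw [hfe n]; exact (hspec n).2.1
  · have : (fun i : Fin n => M.mkQ (telX g i)) = (fun i => M.mkQ (telSeq g n i)) := by
      funext i; rw [telSeq_eq g n i]
    rw [this]; exact (hspec n).2.2

theorem spaceable_compl_iff_quotient_infiniteDimensional'
    {X : Type*} [NormedAddCommGroup X] [NormedSpace ℝ X] [CompleteSpace X]
    (M : Submodule ℝ X) (hM : IsClosed (M : Set X)) :
    (∃ W : Submodule ℝ X, IsClosed (W : Set X) ∧ ¬ FiniteDimensional ℝ W ∧
      (W : Set X) ⊆ ((M : Set X)ᶜ) ∪ {0}) ↔ ¬ FiniteDimensional ℝ (X ⧸ M) := by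
  haveI : IsClosed (M : Set X) := hM
  constructor
  · rintro ⟨W, _, hWfd, hWsub⟩ hfd
    apply hWfd
    haveI := hfd
    apply FiniteDimensional.of_injective (M.mkQ.comp W.subtype)
    rw [← LinearMap.ker_eq_bot]
    rw [eq_bot_iff]
    rintro ⟨w, hwW⟩ hw
    simp only [LinearMap.mem_ker, LinearMap.comp_apply, Submodule.subtype_apply,
      Submodule.mkQ_apply, Submodule.Quotient.mk_eq_zero] at hw
    rcases hWsub hwW with h | h
    · exact absurd hw h
    · simpa using h
  · intro hfd
    obtain ⟨x, hxM, hX, hZ⟩ := exists_good_seq M hfd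
    set z : ℕ → X ⧸ M := fun n => M.mkQ (x n) with hzdef
    have hznz : ∀ n, z n ≠ 0 := by
      intro n h0
      exact hxM n ((Submodule.Quotient.mk_eq_zero M).mp (by simpa [hzdef] using h0))
    have hzn : ∀ n, 0 < ‖z n‖ := fun n => norm_pos_iff.mpr (hznz n)
    -- linear independence of z
    have hzli : LinearIndependent ℝ z := by
      rw [linearIndependent_iff']
      intro s gc hsum i his
      set n := (s.sup id) + 1 with hndef
      have hsub : s ⊆ Finset.range n := by
        intro j hj
        exact Finset.mem_range.mpr (Nat.lt_succ_of_le (Finset.le_sup (f := id) hj))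
      set a : ℕ → ℝ := fun j => if j ∈ s then gc j else 0 with hadef
      have hsum' : ∑ j ∈ Finset.range n, a j • z j = 0 := by
        rw [← Finset.sum_subset hsub (fun j _ hj => by simp [hadef, hj])]
        rw [← hsum]
        apply Finset.sum_congr rfl
        intro j hj; simp [hadef, hj]
      have hin : i < n := Finset.mem_range.mp (hsub his)
      have hb := coeff_bound z hZ a hin
      rw [hsum'] at hb
      simp only [norm_zero, mul_zero] at hb
      have hai : a i = 0 := by
        have := hzn i
        have h0 : |a i| ≤ 0 := by nlinarith [abs_nonneg (a i)]
        simpa [abs_nonpos_iff] using h0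
      simpa [hadef, his] using hai
    have hxli : LinearIndependent ℝ x :=
      LinearIndependent.of_comp M.mkQ hzli
    refine ⟨(Submodule.span ℝ (Set.range x)).topologicalClosure,
      Submodule.isClosed_topologicalClosure _, ?_, ?_⟩
    · intro hfdW
      haveI := hfdW
      set W := (Submodule.span ℝ (Set.range x)).topologicalClosure
      have hmem : ∀ n, x n ∈ W := fun n =>
        Submodule.le_topologicalClosure _ (Submodule.subset_span (Set.mem_range_self n))
      set x' : ℕ → W := fun n => ⟨x n, hmem n⟩ with hx'
      have hx'li : LinearIndependent ℝ x' :=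
        LinearIndependent.of_comp W.subtype (by exact hxli)
      exact Module.Finite.not_linearIndependent_of_infinite x' hx'li
    · intro w hw
      by_cases hwM : w ∈ M
      swap
      · exact Or.inl hwM
      right
      have hw' : w ∈ closure ((Submodule.span ℝ (Set.range x)) : Set X) := hw
      obtain ⟨u, hus, hulim⟩ := mem_closure_iff_seq_limit.mp hw'
      choose c hc using fun k => Finsupp.mem_span_range_iff_exists_finsupp.mp (hus k)
      set N : ℕ → ℕ := fun k => ((c k).support.sup id) + 1 with hNdef
      have hrep : ∀ k n, N k ≤ n → u k = ∑ i ∈ Finset.range n, (c k) i • x i := by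
        intro k n hn
        rw [← hc k]
        apply Finsupp.sum_of_support_subset
        · intro j hj
          exact Finset.mem_range.mpr (lt_of_lt_of_le
            (Nat.lt_succ_of_le (Finset.le_sup (f := id) hj)) hn)
        · intro i _
          exact zero_smul ℝ (x i)
      have hulim' : Filter.Tendsto (fun k => ‖u k - w‖) Filter.atTop (nhds 0) := by
        rw [← tendsto_iff_norm_sub_tendsto_zero] at *
        exact hulim
      have hqu : Filter.Tendsto (fun k => ‖M.mkQ (u k)‖) Filter.atTop (nhds 0) := by
        apply squeeze_zero (fun k => norm_nonneg _) _ hulim'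
        intro k
        have h1 : M.mkQ (u k) = M.mkQ (u k - w) := by
          rw [map_sub, show M.mkQ w = 0 by
            rw [Submodule.mkQ_apply]; exact (Submodule.Quotient.mk_eq_zero M).mpr hwM, sub_zero]
        rw [h1]
        exact Submodule.Quotient.norm_mk_le _ _
      have hqrep : ∀ k n, N k ≤ n → M.mkQ (u k) = ∑ i ∈ Finset.range n, (c k) i • z i := by
        intro k n hn
        rw [hrep k n hn, map_sum]
        apply Finset.sum_congr rfl
        intro i _
        rw [map_smul]
      have hcoef : ∀ i, Filter.Tendsto (fun k => (c k) i) Filter.atTop (nhds 0) := by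
        intro i
        rw [tendsto_zero_iff_abs_tendsto_zero]
        have hb : ∀ k, |(c k) i| ≤ (4 / ‖z i‖) * ‖M.mkQ (u k)‖ := by
          intro k
          have hilt : i < max (N k) (i+1) := lt_of_lt_of_le (Nat.lt_succ_self i) (le_max_right _ _)
          have h := coeff_bound z hZ (c k) hilt
          rw [← hqrep k _ (le_max_left _ _)] at h
          rw [div_mul_eq_mul_div, le_div_iff₀ (hzn i)]
          linarith [h]
        apply squeeze_zero (fun k => abs_nonneg _) hb
        have := hqu.const_mul (4 / ‖z i‖)
        simpa using this
      have hk2 : ∀ k m, ‖∑ i ∈ Finset.range m, (c k) i • x i‖ ≤ 2 * ‖u k - w‖ := by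
        intro k m
        have hBl : ∀ l, ‖∑ i ∈ Finset.range m, (c k) i • x i‖ ≤
            2 * ‖u k - u l‖ + ‖∑ i ∈ Finset.range m, (c l) i • x i‖ := by
          intro l
          set n := max m (max (N k) (N l)) with hn
          have hsub : ∑ i ∈ Finset.range n, ((c k) i - (c l) i) • x i = u k - u l := by
            rw [hrep k n (le_trans (le_max_left _ _) (le_max_right _ _)),
              hrep l n (le_trans (le_max_right _ _) (le_max_right _ _))]
            rw [← Finset.sum_sub_distrib]
            apply Finset.sum_congr rfl
            intro i _
            rw [sub_smul]
          have h1 := basic_ineq x hX (fun j => (c k) j - (c l) j) (le_max_left m (max (N k) (N l)))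
          rw [hsub] at h1
          have h2 : ∑ i ∈ Finset.range m, (c k) i • x i =
              (∑ i ∈ Finset.range m, ((c k) i - (c l) i) • x i) +
              ∑ i ∈ Finset.range m, (c l) i • x i := by
            rw [← Finset.sum_add_distrib]
            apply Finset.sum_congr rfl
            intro i _
            rw [← add_smul]
            ring_nf
          rw [h2]
          calc ‖_ + _‖ ≤ ‖∑ i ∈ Finset.range m, ((c k) i - (c l) i) • x i‖ +
              ‖∑ i ∈ Finset.range m, (c l) i • x i‖ := norm_add_le _ _
            _ ≤ 2 * ‖u k - u l‖ + ‖∑ i ∈ Finset.range m, (c l) i • x i‖ := by linarith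
        have hlim : Filter.Tendsto
            (fun l => 2 * ‖u k - u l‖ + ‖∑ i ∈ Finset.range m, (c l) i • x i‖)
            Filter.atTop (nhds (2 * ‖u k - w‖ + 0)) := by
          apply Filter.Tendsto.add
          · exact ((tendsto_const_nhds.sub hulim).norm).const_mul 2
          · have : Filter.Tendsto (fun l => ∑ i ∈ Finset.range m, (c l) i • x i)
                Filter.atTop (nhds 0) := by
              have h0 : (0 : X) = ∑ i ∈ Finset.range m, (0:ℝ) • x i := by simp
              rw [h0]
              apply tendsto_finset_sum
              intro i _
              exact (hcoef i).smul_const (x i)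
            simpa using this.norm
        have := ge_of_tendsto' hlim (fun l => hBl l)
        linarith [this]
      have hfin : ∀ k, ‖w‖ ≤ 3 * ‖u k - w‖ := by
        intro k
        have h1 := hk2 k (N k)
        rw [← hrep k (N k) le_rfl] at h1
        have h2 : ‖w‖ ≤ ‖u k - w‖ + ‖u k‖ := by
          calc ‖w‖ = ‖u k - (u k - w)‖ := by congr 1; abel
          _ ≤ ‖u k‖ + ‖u k - w‖ := norm_sub_le _ _
          _ = ‖u k - w‖ + ‖u k‖ := by ring
        linarith
      have hw0 : ‖w‖ ≤ 0 := by
        apply ge_of_tendsto' (x := Filter.atTop) (f := fun k => 3 * ‖u k - w‖)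
        · simpa using hulim'.const_mul 3
        · exact hfin
      simpa using norm_le_zero_iff.mp hw0


/-- For a closed subspace `M` of a real Banach space `X`, the complement `X ∖ M` is spaceable
iff the quotient `X ⧸ M` is infinite-dimensional. -/
theorem spaceable_compl_iff_quotient_infiniteDimensional
    {X : Type*} [NormedAddCommGroup X] [NormedSpace ℝ X] [CompleteSpace X]
    (M : Submodule ℝ X) (hM : IsClosed (M : Set X)) :
    Spaceable ((M : Set X)ᶜ) ↔ ¬ FiniteDimensional ℝ (X ⧸ M) :=
  spaceable_compl_iff_quotient_infiniteDimensional' M hM
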